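/- Let X be a real Hilbert space, let m ≥ 2, for each i ∈ {1,…,m} let T_i : X → X be firmly nonexpansive and asymptotically regular, i.e., 0 ∈ closure (Set.range (fun x => x − T_i x)), and let λ_1,…,λ_m ∈ (0,1] with ∑_{i=1}^m λ_i = 1. Then the convex combination T̄ = ∑_{i=1}^m λ_i T_i is asymptotically regular, i.e., 0 ∈ closure (Set.range (fun x => x − T̄ x)). -/

import Mathlib

lemma fne_nonexp {X : Type*} [NormedAddCommGroup X] [InnerProductSpace ℝ X] (T : X → X)
    (hT : ∀ x y : X, ‖T x - T y‖ ^ 2 ≤ (inner ℝ (x - y) (T x - T y) : ℝ)) (x y : X) :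
    ‖T x - T y‖ ≤ ‖x - y‖ := by
  have h1 := hT x y
  have h2 := real_inner_le_norm (x - y) (T x - T y)
  nlinarith [norm_nonneg (T x - T y), norm_nonneg (x - y)]

lemma fne_key {X : Type*} [NormedAddCommGroup X] [InnerProductSpace ℝ X] (T : X → X)
    (hT : ∀ x y : X, ‖T x - T y‖ ^ 2 ≤ (inner ℝ (x - y) (T x - T y) : ℝ)) (x z : X) :
    (inner ℝ ((z - T z) - (x - T x)) x : ℝ) ≤ ‖z‖ ^ 2 / 4 := by
  set u : X := (z - T z) - (x - T x) with hu
  have hfne : ‖u‖ ^ 2 ≤ (inner ℝ (z - x) u : ℝ) := by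
    have h1 := hT z x
    have hab : u = (z - x) - (T z - T x) := by rw [hu]; abel
    have h2 : (inner ℝ (z - x) ((z - x) - (T z - T x)) : ℝ)
        = ‖z - x‖ ^ 2 - inner ℝ (z - x) (T z - T x) := by
      rw [inner_sub_right, real_inner_self_eq_norm_sq]
    have h3 : ‖(z - x) - (T z - T x)‖ ^ 2
        = ‖z - x‖ ^ 2 - 2 * inner ℝ (z - x) (T z - T x) + ‖T z - T x‖ ^ 2 :=
      norm_sub_sq_real _ _
    rw [hab, h2, h3]
    linarith
  have hx : (inner ℝ u x : ℝ) = inner ℝ u z - inner ℝ (z - x) u := by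
    have h4 : (inner ℝ u (z - x) : ℝ) = inner ℝ u z - inner ℝ u x := inner_sub_right u z x
    have h5 : (inner ℝ u (z - x) : ℝ) = inner ℝ (z - x) u := real_inner_comm _ _
    linarith
  have h3 := real_inner_le_norm u z
  nlinarith [sq_nonneg (‖u‖ - ‖z‖ / 2), norm_nonneg u, norm_nonneg z]

theorem stmt_12 {X : Type*} [NormedAddCommGroup X] [InnerProductSpace ℝ X] [CompleteSpace X]
    (m : ℕ) (hm : 2 ≤ m) (T : Fin m → X → X)
    (hT : ∀ i, ∀ x y : X, ‖T i x - T i y‖ ^ 2 ≤ (inner ℝ (x - y) (T i x - T i y) : ℝ))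
    (hreg : ∀ i, (0 : X) ∈ closure (Set.range (fun x => x - T i x)))
    (lam : Fin m → ℝ) (hlam : ∀ i, lam i ∈ Set.Ioc (0 : ℝ) 1) (hsum : ∑ i, lam i = 1) :
    (0 : X) ∈ closure (Set.range (fun x => x - ∑ i, lam i • T i x)) := by
  have hne : Nonempty X := ⟨0⟩
  rw [Metric.mem_closure_iff]
  intro ε hε
  have hz' : ∀ i : Fin m, ∃ w : X, ‖w - T i w‖ < ε / 4 := by
    intro i
    rcases Metric.mem_closure_iff.mp (hreg i) (ε / 4) (by positivity) with ⟨y, hy, hyd⟩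
    rcases hy with ⟨w, rfl⟩
    exact ⟨w, by simpa only [dist_zero_left] using hyd⟩
  choose z hz using hz'
  set Tb : X → X := fun x => ∑ i, lam i • T i x with hTb
  set b : X := ∑ i, lam i • (z i - T i (z i)) with hb
  set C : ℝ := ∑ i, lam i * (‖z i‖ ^ 2 / 4) with hC
  have hC0 : 0 ≤ C := Finset.sum_nonneg fun i _ => by
    have := (hlam i).1; positivity
  set μ : ℝ := ε ^ 2 / (16 * (C + 1)) with hμ
  have hμ0 : 0 < μ := by rw [hμ]; positivity
  have hμC : μ * C ≤ ε ^ 2 / 16 := by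
    rw [hμ, div_mul_eq_mul_div, div_le_div_iff₀ (by positivity) (by norm_num)]
    nlinarith [sq_nonneg ε, hC0]
  have h1μ : (0 : ℝ) < 1 + μ := by linarith
  have hTne : ∀ x y : X, ‖Tb x - Tb y‖ ≤ ‖x - y‖ := by
    intro x y
    have heq : Tb x - Tb y = ∑ i, lam i • (T i x - T i y) := by
      rw [hTb]; simp [smul_sub, Finset.sum_sub_distrib]
    rw [heq]
    calc ‖∑ i, lam i • (T i x - T i y)‖ ≤ ∑ i, ‖lam i • (T i x - T i y)‖ := norm_sum_le _ _
      _ ≤ ∑ i, lam i * ‖x - y‖ := Finset.sum_le_sum fun i _ => by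
          rw [norm_smul, Real.norm_eq_abs, abs_of_pos (hlam i).1]
          exact mul_le_mul_of_nonneg_left (fne_nonexp (T i) (hT i) x y) (hlam i).1.le
      _ = ‖x - y‖ := by rw [← Finset.sum_mul, hsum, one_mul]
  set f : X → X := fun x => (1 + μ)⁻¹ • (Tb x + b) with hf
  have hcontr : ContractingWith ⟨(1 + μ)⁻¹, by positivity⟩ f := by
    constructor
    · apply NNReal.coe_lt_coe.mp
      push_cast
      change (1 + μ)⁻¹ < (1 : ℝ)
      rw [inv_lt_one_iff₀]
      right; linarith
    · apply LipschitzWith.of_dist_le_mul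
      intro x y
      have heq : f x - f y = (1 + μ)⁻¹ • (Tb x - Tb y) := by
        simp only [hf, ← smul_sub]; congr 1; abel
      rw [dist_eq_norm, heq, norm_smul, Real.norm_eq_abs, abs_of_pos (by positivity),
        dist_eq_norm]
      push_cast
      exact mul_le_mul_of_nonneg_left (hTne x y) (by positivity)
  set x : X := hcontr.fixedPoint f with hxdef
  have hxfix : f x = x := hcontr.fixedPoint_isFixedPt
  have h1 : Tb x + b = x + μ • x := by
    have h0 : Tb x + b = (1 + μ) • ((1 + μ)⁻¹ • (Tb x + b)) := by
      rw [smul_smul, mul_inv_cancel₀ h1μ.ne', one_smul]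
    rw [h0]
    show (1 + μ) • f x = x + μ • x
    rw [hxfix, add_smul, one_smul]
  have hfix : x - Tb x = b - μ • x := by
    rw [← sub_eq_zero]
    have h0 : x - Tb x - (b - μ • x) = (x + μ • x) - (Tb x + b) := by abel
    rw [h0, h1, sub_self]
  have hbnorm : ‖b‖ ≤ ε / 4 := by
    rw [hb]
    calc ‖∑ i, lam i • (z i - T i (z i))‖ ≤ ∑ i, ‖lam i • (z i - T i (z i))‖ := norm_sum_le _ _
      _ ≤ ∑ i, lam i * (ε / 4) := Finset.sum_le_sum fun i _ => by
          rw [norm_smul, Real.norm_eq_abs, abs_of_pos (hlam i).1]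
          exact mul_le_mul_of_nonneg_left (hz i).le (hlam i).1.le
      _ = ε / 4 := by rw [← Finset.sum_mul, hsum, one_mul]
  have hxTb : x - Tb x = ∑ i, lam i • (x - T i x) := by
    simp only [smul_sub, Finset.sum_sub_distrib, ← Finset.sum_smul, hsum, one_smul, hTb]
  have hkey : μ * ‖x‖ ^ 2 ≤ C := by
    have h4 : μ • x = ∑ i, lam i • ((z i - T i (z i)) - (x - T i x)) := by
      have h5 : μ • x = b - (x - Tb x) := by rw [hfix]; abel
      rw [h5, hb, hxTb, ← Finset.sum_sub_distrib]
      congr 1; funext i; simp [smul_sub]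
    have h5 : μ * ‖x‖ ^ 2 = inner ℝ (μ • x) x := by
      rw [real_inner_smul_left, real_inner_self_eq_norm_sq]
    rw [h5, h4, sum_inner, hC]
    refine Finset.sum_le_sum fun i _ => ?_
    rw [real_inner_smul_left]
    exact mul_le_mul_of_nonneg_left (fne_key (T i) (hT i) x (z i)) (hlam i).1.le
  have hmux : μ * ‖x‖ ≤ ε / 4 := by
    nlinarith [norm_nonneg x, mul_le_mul_of_nonneg_left hkey hμ0.le, hμC, hε,
      sq_nonneg (μ * ‖x‖ + ε / 4), sq_nonneg (μ * ‖x‖ - ε / 4)]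
  refine ⟨x - Tb x, ⟨x, rfl⟩, ?_⟩
  rw [dist_zero_left]
  calc ‖x - Tb x‖ = ‖b - μ • x‖ := by rw [hfix]
    _ ≤ ‖b‖ + ‖μ • x‖ := norm_sub_le _ _
    _ = ‖b‖ + μ * ‖x‖ := by rw [norm_smul, Real.norm_eq_abs, abs_of_pos hμ0]
    _ ≤ ε / 4 + ε / 4 := add_le_add hbnorm hmux
    _ < ε := by linarith
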